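/- Discrete Gronwall inequality with weakly singular kernel: let α ∈ (0,1), τ > 0, t_j = jτ, and let (a_n)_{n≥0} be nonnegative reals satisfying a_n ≤ b + K τ Σ_{j=0}^{n} t_{n−j+1}^{α−1} a_j for all n ≤ N, where b ≥ 0, K ≥ 0 and K τ^α < 1. Then there exists a constant C depending only on α, K, and T₀ = Nτ such that a_n ≤ C b for all n ≤ N. -/

import Mathlib

set_option maxHeartbeats 1600000
section DSG
open Finset

lemma dsg_mvt_rpow {p a b : ℝ} (ha : 0 < a) (hab : a < b) :
    ∃ c, a < c ∧ c < b ∧ b ^ p - a ^ p = p * c ^ (p - 1) * (b - a) := by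
  have hcont : ContinuousOn (fun x : ℝ => x ^ p) (Set.Icc a b) :=
    ContinuousOn.rpow_const continuousOn_id
      (fun x hx => Or.inl (ne_of_gt (lt_of_lt_of_le ha hx.1)))
  have hderiv : ∀ x ∈ Set.Ioo a b, HasDerivAt (fun x : ℝ => x ^ p) (p * x ^ (p - 1)) x :=
    fun x hx => Real.hasDerivAt_rpow_const (Or.inl (ne_of_gt (ha.trans hx.1)))
  obtain ⟨c, hc, hceq⟩ := exists_hasDerivAt_eq_slope (fun x : ℝ => x ^ p)
    (fun x => p * x ^ (p - 1)) hab hcont hderiv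
  refine ⟨c, hc.1, hc.2, ?_⟩
  have hba : b - a ≠ 0 := by linarith [hab]
  field_simp at hceq
  linarith [hceq]

lemma dsg_tel_pos {p : ℝ} (hp0 : 0 < p) (hp1 : p ≤ 1) {a b : ℝ}
    (ha : 0 ≤ a) (hab : a < b) : p * b ^ (p - 1) * (b - a) ≤ b ^ p - a ^ p := by
  rcases eq_or_lt_of_le ha with rfl | ha'
  · rw [Real.zero_rpow hp0.ne', sub_zero, sub_zero]
    have hb : (0:ℝ) < b := hab
    have hbb : b ^ (p - 1) * b = b ^ p := by
      rw [← Real.rpow_add_one hb.ne' (p - 1)]; ring_nf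
    calc p * b ^ (p-1) * b = p * (b ^ p) := by rw [mul_assoc, hbb]
      _ ≤ 1 * b ^ p := by
          have := Real.rpow_nonneg hb.le p
          nlinarith
      _ = b ^ p := one_mul _
  · obtain ⟨c, hac, hcb, heq⟩ := dsg_mvt_rpow (p := p) ha' hab
    have hcb' : b ^ (p-1) ≤ c ^ (p-1) :=
      Real.rpow_le_rpow_of_nonpos (ha'.trans hac) hcb.le (by linarith)
    rw [heq]
    have hba : (0:ℝ) ≤ b - a := by linarith
    have := mul_le_mul_of_nonneg_right (mul_le_mul_of_nonneg_left hcb' hp0.le) hba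
    linarith

lemma dsg_tel_neg {p : ℝ} (hp0 : p < 0) {a b : ℝ}
    (ha : 0 < a) (hab : a < b) : (-p) * b ^ (p - 1) * (b - a) ≤ a ^ p - b ^ p := by
  obtain ⟨c, hac, hcb, heq⟩ := dsg_mvt_rpow (p := p) ha hab
  have hcb' : b ^ (p-1) ≤ c ^ (p-1) :=
    Real.rpow_le_rpow_of_nonpos (ha.trans hac) hcb.le (by linarith)
  have h1 : a ^ p - b ^ p = (-p) * c ^ (p-1) * (b - a) := by linear_combination -heq
  rw [h1]
  have hba : (0:ℝ) ≤ b - a := by linarith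
  have := mul_le_mul_of_nonneg_right (mul_le_mul_of_nonneg_left hcb' (by linarith : (0:ℝ) ≤ -p)) hba
  linarith

lemma dsg_head {α : ℝ} (hα0 : 0 < α) (hα1 : α < 1) (M : ℕ) :
    ∑ i ∈ range M, ((i : ℝ) + 1) ^ (α - 1) ≤ (M : ℝ) ^ α / α := by
  rw [le_div_iff₀ hα0]
  have key : ∀ i : ℕ, ((i:ℝ)+1) ^ (α-1) * α ≤ ((i:ℝ)+1) ^ α - (i:ℝ) ^ α := by
    intro i
    have h := dsg_tel_pos hα0 hα1.le (by positivity : (0:ℝ) ≤ (i:ℝ))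
      (by linarith [Nat.cast_nonneg (α := ℝ) i] : (i:ℝ) < (i:ℝ)+1)
    have : ((i:ℝ)+1) - (i:ℝ) = 1 := by ring
    rw [this, mul_one] at h
    linarith
  calc (∑ i ∈ range M, ((i:ℝ)+1)^(α-1)) * α
      = ∑ i ∈ range M, ((i:ℝ)+1)^(α-1) * α := by rw [Finset.sum_mul]
    _ ≤ ∑ i ∈ range M, (((i:ℝ)+1) ^ α - (i:ℝ) ^ α) := Finset.sum_le_sum (fun i _ => key i)
    _ = ∑ i ∈ range M, ((((i+1 : ℕ)):ℝ) ^ α - ((i:ℕ):ℝ) ^ α) := by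
        apply Finset.sum_congr rfl; intro i _
        have : (((i+1 : ℕ)):ℝ) = (i:ℝ) + 1 := by push_cast; ring
        rw [this]
    _ = ((M:ℕ):ℝ) ^ α - ((0:ℕ):ℝ) ^ α := Finset.sum_range_sub (fun i => ((i:ℕ):ℝ) ^ α) M
    _ = (M : ℝ) ^ α := by norm_num [Real.zero_rpow hα0.ne']

lemma dsg_tail {α : ℝ} (hα0 : 0 < α) (hα1 : α < 1) (M n : ℕ) (hM : 1 ≤ M) :
    ∑ i ∈ Finset.Ico M n, ((i : ℝ) + 1) ^ (α - 2) ≤ (M : ℝ) ^ (α - 1) / (1 - α) := by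
  have h1α : (0:ℝ) < 1 - α := by linarith
  rw [le_div_iff₀ h1α]
  have key : ∀ i : ℕ, 1 ≤ i → ((i:ℝ)+1) ^ (α-2) * (1-α) ≤ (i:ℝ) ^ (α-1) - ((i:ℝ)+1) ^ (α-1) := by
    intro i hi
    have hi' : (1:ℝ) ≤ (i:ℝ) := by exact_mod_cast hi
    have h := dsg_tel_neg (p := α - 1) (by linarith) (by linarith : (0:ℝ) < (i:ℝ))
      (by linarith : (i:ℝ) < (i:ℝ)+1)
    have e1 : ((i:ℝ)+1) - (i:ℝ) = 1 := by ring
    have e2 : α - 1 - 1 = α - 2 := by ring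
    rw [e1, mul_one, e2] at h
    linarith
  rcases le_or_gt n M with hnM | hMn
  · rw [Finset.Ico_eq_empty (by omega)]
    simp [Real.rpow_nonneg (by positivity : (0:ℝ) ≤ (M:ℝ))]
  · calc (∑ i ∈ Finset.Ico M n, ((i:ℝ)+1)^(α-2)) * (1-α)
        = ∑ i ∈ Finset.Ico M n, ((i:ℝ)+1)^(α-2) * (1-α) := by rw [Finset.sum_mul]
      _ ≤ ∑ i ∈ Finset.Ico M n, ((i:ℝ)^(α-1) - ((i:ℝ)+1)^(α-1)) :=
          Finset.sum_le_sum (fun i hi => key i (le_trans hM (Finset.mem_Ico.mp hi).1))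
      _ = ∑ k ∈ range (n - M), ((((M+k:ℕ)):ℝ)^(α-1) - (((M+k:ℕ):ℝ)+1)^(α-1)) := by
          rw [Finset.sum_Ico_eq_sum_range]
      _ = ∑ k ∈ range (n - M), ((((M+k:ℕ)):ℝ)^(α-1) - (((M+(k+1):ℕ)):ℝ)^(α-1)) := by
          apply Finset.sum_congr rfl; intro k _
          have : (((M+(k+1) : ℕ)):ℝ) = ((M+k:ℕ):ℝ) + 1 := by push_cast; ring
          rw [this]
      _ = (((M+0:ℕ)):ℝ)^(α-1) - (((M+(n-M):ℕ)):ℝ)^(α-1) :=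
          Finset.sum_range_sub' (fun k => (((M+k:ℕ)):ℝ)^(α-1)) (n - M)
      _ ≤ (M : ℝ) ^ (α - 1) := by
          simp only [Nat.add_zero]
          have : (0:ℝ) ≤ (((M+(n-M):ℕ)):ℝ)^(α-1) := Real.rpow_nonneg (by positivity) _
          linarith

lemma dsg_step1 {α : ℝ} (hα0 : 0 < α) (hα1 : α < 1) {lam τ : ℝ}
    (hlam : 0 < lam) (hτ : 0 < τ) (n : ℕ) :
    τ ^ α * ∑ j ∈ range n, ((j:ℝ)+1) ^ (α-1) / (1 + ((j:ℝ)+1) * (lam * τ))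
      ≤ (1/α + 2/(1-α)) * lam ^ (-α) := by
  have h1α : (0:ℝ) < 1 - α := by linarith
  set x := lam * τ with hx
  have hx0 : 0 < x := by positivity
  have hτα : (0:ℝ) < τ ^ α := Real.rpow_pos_of_pos hτ α
  have hlamα : (0:ℝ) < lam ^ (-α) := Real.rpow_pos_of_pos hlam _
  have hden : ∀ j : ℕ, (0:ℝ) < 1 + ((j:ℝ)+1) * x := by
    intro j; have : (0:ℝ) ≤ (j:ℝ) := Nat.cast_nonneg j; nlinarith
  have hj1 : ∀ j : ℕ, (0:ℝ) < (j:ℝ) + 1 := by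
    intro j; have : (0:ℝ) ≤ (j:ℝ) := Nat.cast_nonneg j; linarith
  have hsplit : ∀ j : ℕ, ((j:ℝ)+1) ^ (α-2) * ((j:ℝ)+1) = ((j:ℝ)+1) ^ (α-1) := by
    intro j
    rw [← Real.rpow_add_one (hj1 j).ne' (α-2)]; ring_nf
  have hbound2 : ∀ j : ℕ, ((j:ℝ)+1) ^ (α-1) / (1 + ((j:ℝ)+1) * x)
      ≤ ((j:ℝ)+1) ^ (α-2) / x := by
    intro j
    rw [div_le_div_iff₀ (hden j) hx0, ← hsplit j]
    have h2 : (0:ℝ) ≤ ((j:ℝ)+1) ^ (α-2) := Real.rpow_nonneg (hj1 j).le _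
    nlinarith [mul_nonneg h2 (mul_nonneg (hj1 j).le hx0.le)]
  have hone_le : (1:ℝ) ≤ 1/α := by rw [le_div_iff₀ hα0]; linarith
  -- uniform bound on ∑ (j+1)^(α-2)
  have hsum2 : ∀ m : ℕ, ∑ j ∈ range m, ((j:ℝ)+1) ^ (α-2) ≤ 1 + 1/(1-α) := by
    intro m
    cases m with
    | zero => simp; positivity
    | succ m =>
      rw [Finset.sum_range_succ']
      have h0 : (((0:ℕ):ℝ)+1) ^ (α-2) = 1 := by norm_num
      rw [h0]
      have e : ∑ j ∈ range m, (((j+1:ℕ):ℝ)+1) ^ (α-2)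
          = ∑ i ∈ Finset.Ico 1 (m+1), ((i:ℝ)+1) ^ (α-2) := by
        rw [Finset.sum_Ico_eq_sum_range]
        apply Finset.sum_congr (by norm_num)
        intro k _
        have : ((1+k:ℕ):ℝ) = ((k+1:ℕ):ℝ) := by push_cast; ring
        rw [this]
      have := dsg_tail hα0 hα1 1 (m+1) le_rfl
      rw [← e] at this
      have h1 : ((1:ℕ):ℝ) ^ (α-1) = 1 := by norm_num
      rw [h1] at this
      linarith
  rcases le_or_gt 1 x with hx1 | hx1
  · -- case 1 ≤ x
    have hxinv : τ ^ α / x ≤ lam ^ (-α) := by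
      have hinv : lam⁻¹ ≤ τ := by
        rw [show lam⁻¹ = 1/lam by ring, div_le_iff₀ hlam]; nlinarith
      have h1 : τ ^ (α-1) ≤ lam ^ (1-α) := by
        have := Real.rpow_le_rpow_of_nonpos (inv_pos.mpr hlam) hinv (by linarith : α-1 ≤ 0)
        calc τ ^ (α-1) ≤ (lam⁻¹) ^ (α-1) := this
          _ = (lam ^ (α-1))⁻¹ := Real.inv_rpow hlam.le _
          _ = lam ^ (-(α-1)) := (Real.rpow_neg hlam.le _).symm
          _ = lam ^ (1-α) := by ring_nf
      have e1 : τ ^ α / x = τ ^ (α-1) / lam := by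
        have e2 : τ ^ α = τ ^ (α-1) * τ := by
          rw [← Real.rpow_add_one hτ.ne' (α-1)]; ring_nf
        rw [e2, hx]
        field_simp
      rw [e1]
      calc τ ^ (α-1) / lam ≤ lam ^ (1-α) / lam := by
            gcongr
        _ = lam ^ (-α) := by
            rw [div_eq_iff hlam.ne', ← Real.rpow_add_one hlam.ne' (-α)]
            ring_nf
    calc τ ^ α * ∑ j ∈ range n, ((j:ℝ)+1) ^ (α-1) / (1 + ((j:ℝ)+1) * x)
        ≤ τ ^ α * ((∑ j ∈ range n, ((j:ℝ)+1) ^ (α-2)) / x) := by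
          apply mul_le_mul_of_nonneg_left ?_ hτα.le
          rw [Finset.sum_div]
          exact Finset.sum_le_sum (fun j _ => hbound2 j)
      _ ≤ τ ^ α * ((1 + 1/(1-α)) / x) := by
          apply mul_le_mul_of_nonneg_left ?_ hτα.le
          gcongr
          exact hsum2 n
      _ = (1 + 1/(1-α)) * (τ ^ α / x) := by ring
      _ ≤ (1 + 1/(1-α)) * lam ^ (-α) := by
          apply mul_le_mul_of_nonneg_left hxinv (by positivity)
      _ ≤ (1/α + 2/(1-α)) * lam ^ (-α) := by
          have h2 : 1/(1-α) ≤ 2/(1-α) := by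
            gcongr
            norm_num
          nlinarith
  · -- case x < 1
    set M : ℕ := ⌊x⁻¹⌋₊ with hM
    have hxinv1 : (1:ℝ) ≤ x⁻¹ := by
      have h := mul_inv_cancel₀ hx0.ne'
      nlinarith [inv_pos.mpr hx0]
    have hM1 : 1 ≤ M := Nat.le_floor (by exact_mod_cast hxinv1)
    have hM0 : (0:ℝ) < (M:ℝ) := by exact_mod_cast hM1
    have hMle : (M:ℝ) ≤ x⁻¹ := Nat.floor_le (by positivity)
    have hMgt : x⁻¹ < (M:ℝ) + 1 := Nat.lt_floor_add_one _
    have hterm : ∀ j : ℕ, ((j:ℝ)+1) ^ (α-1) / (1 + ((j:ℝ)+1) * x)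
        ≤ (if j + 1 ≤ M then ((j:ℝ)+1) ^ (α-1) else 0)
          + (if j + 1 ≤ M then 0 else ((j:ℝ)+1) ^ (α-2) / x) := by
      intro j
      split
      · rw [add_zero]
        apply div_le_self (Real.rpow_nonneg (hj1 j).le _)
        have h0j : (0:ℝ) ≤ ((j:ℝ)+1) * x := by positivity
        linarith
      · rw [zero_add]; exact hbound2 j
    have hheadsum : ∑ j ∈ range n, (if j + 1 ≤ M then ((j:ℝ)+1) ^ (α-1) else 0)
        ≤ (x⁻¹) ^ α / α := by
      calc ∑ j ∈ range n, (if j + 1 ≤ M then ((j:ℝ)+1) ^ (α-1) else 0)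
          = ∑ j ∈ (range n).filter (fun j => j + 1 ≤ M), ((j:ℝ)+1) ^ (α-1) :=
            (Finset.sum_filter _ _).symm
        _ ≤ ∑ j ∈ range M, ((j:ℝ)+1) ^ (α-1) := by
            apply Finset.sum_le_sum_of_subset_of_nonneg
            · intro j hj
              simp only [Finset.mem_filter, Finset.mem_range] at hj ⊢
              omega
            · intro j _ _; exact Real.rpow_nonneg (hj1 j).le _
        _ ≤ (M:ℝ) ^ α / α := dsg_head hα0 hα1 M
        _ ≤ (x⁻¹) ^ α / α := by
            gcongr
    have htailsum : ∑ j ∈ range n, (if j + 1 ≤ M then 0 else ((j:ℝ)+1) ^ (α-2) / x)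
        ≤ (M:ℝ) ^ (α-1) / (1-α) / x := by
      have hfe : (range n).filter (fun j => ¬ (j + 1 ≤ M)) = Finset.Ico M n := by
        ext j
        simp only [Finset.mem_filter, Finset.mem_range, Finset.mem_Ico]
        omega
      calc ∑ j ∈ range n, (if j + 1 ≤ M then 0 else ((j:ℝ)+1) ^ (α-2) / x)
          = ∑ j ∈ (range n).filter (fun j => ¬ (j + 1 ≤ M)), ((j:ℝ)+1) ^ (α-2) / x := by
            rw [Finset.sum_filter]
            apply Finset.sum_congr rfl
            intro j _
            by_cases h : j + 1 ≤ M <;> simp [h]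
        _ = (∑ j ∈ Finset.Ico M n, ((j:ℝ)+1) ^ (α-2)) / x := by
            rw [hfe, Finset.sum_div]
        _ ≤ (M:ℝ) ^ (α-1) / (1-α) / x := by
            gcongr
            exact dsg_tail hα0 hα1 M n hM1
    have keyA : τ ^ α * (x⁻¹) ^ α = lam ^ (-α) := by
      rw [← Real.mul_rpow hτ.le (by positivity : (0:ℝ) ≤ x⁻¹)]
      have : τ * x⁻¹ = lam⁻¹ := by
        rw [hx]; field_simp
      rw [this, Real.inv_rpow hlam.le, ← Real.rpow_neg hlam.le]
    have keyB : (M:ℝ) ^ (α-1) ≤ 2 * (x⁻¹) ^ (α-1) := by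
      have hge : x⁻¹ / 2 ≤ (M:ℝ) := by
        have : (M:ℝ) + 1 ≤ 2 * (M:ℝ) := by
          have : (1:ℝ) ≤ (M:ℝ) := by exact_mod_cast hM1
          linarith
        linarith
      calc (M:ℝ) ^ (α-1) ≤ (x⁻¹ / 2) ^ (α-1) :=
            Real.rpow_le_rpow_of_nonpos (by positivity) hge (by linarith)
        _ = (x⁻¹) ^ (α-1) * ((2:ℝ)⁻¹) ^ (α-1) := by
            rw [div_eq_mul_inv, Real.mul_rpow (by positivity) (by positivity)]
        _ ≤ 2 * (x⁻¹) ^ (α-1) := by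
            have h2 : ((2:ℝ)⁻¹) ^ (α-1) = 2 ^ (1-α) := by
              rw [Real.inv_rpow (by norm_num : (0:ℝ) ≤ 2), ← Real.rpow_neg (by norm_num : (0:ℝ) ≤ 2)]
              ring_nf
            have h3 : (2:ℝ) ^ (1-α) ≤ 2 := by
              calc (2:ℝ) ^ (1-α) ≤ (2:ℝ) ^ (1:ℝ) :=
                    Real.rpow_le_rpow_of_exponent_le (by norm_num) (by linarith)
                _ = 2 := Real.rpow_one 2
            have h4 : (0:ℝ) ≤ (x⁻¹) ^ (α-1) := Real.rpow_nonneg (by positivity) _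
            rw [h2]
            nlinarith
    have keyC : (x⁻¹) ^ (α-1) / x = (x⁻¹) ^ α := by
      have : (x⁻¹) ^ (α-1) * x⁻¹ = (x⁻¹) ^ α := by
        rw [← Real.rpow_add_one (by positivity : x⁻¹ ≠ 0) (α-1)]; ring_nf
      rw [div_eq_mul_inv, this]
    calc τ ^ α * ∑ j ∈ range n, ((j:ℝ)+1) ^ (α-1) / (1 + ((j:ℝ)+1) * x)
        ≤ τ ^ α * ((x⁻¹) ^ α / α + (M:ℝ) ^ (α-1) / (1-α) / x) := by
          apply mul_le_mul_of_nonneg_left ?_ hτα.le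
          calc ∑ j ∈ range n, ((j:ℝ)+1) ^ (α-1) / (1 + ((j:ℝ)+1) * x)
              ≤ ∑ j ∈ range n, ((if j + 1 ≤ M then ((j:ℝ)+1) ^ (α-1) else 0)
                + (if j + 1 ≤ M then 0 else ((j:ℝ)+1) ^ (α-2) / x)) :=
                Finset.sum_le_sum (fun j _ => hterm j)
            _ = (∑ j ∈ range n, (if j + 1 ≤ M then ((j:ℝ)+1) ^ (α-1) else 0))
                + ∑ j ∈ range n, (if j + 1 ≤ M then 0 else ((j:ℝ)+1) ^ (α-2) / x) :=
                Finset.sum_add_distrib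
            _ ≤ (x⁻¹) ^ α / α + (M:ℝ) ^ (α-1) / (1-α) / x :=
                add_le_add hheadsum htailsum
      _ ≤ τ ^ α * ((x⁻¹) ^ α / α + 2 * (x⁻¹) ^ (α-1) / (1-α) / x) := by
          apply mul_le_mul_of_nonneg_left ?_ hτα.le
          gcongr
      _ = τ ^ α * (x⁻¹) ^ α / α + 2 * (τ ^ α * ((x⁻¹) ^ (α-1) / x)) / (1-α) := by
          ring
      _ = lam ^ (-α) / α + 2 * lam ^ (-α) / (1-α) := by
          rw [keyC, keyA]
      _ = (1/α + 2/(1-α)) * lam ^ (-α) := by ring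

lemma dsg_sum_shift (G : ℕ → ℝ) (n : ℕ) :
    ∑ j ∈ range n, G (n - j) = ∑ j ∈ range n, G (j + 1) := by
  rw [← Finset.sum_range_reflect (fun j => G (j + 1)) n]
  apply Finset.sum_congr rfl
  intro j hj
  rw [Finset.mem_range] at hj
  congr 1
  omega

/-- Discrete Gronwall inequality with weakly singular kernel. -/
theorem discrete_singular_gronwall (α K T₀ : ℝ) (hα : α ∈ Set.Ioo (0:ℝ) 1)
    (hK : 0 ≤ K) (hT₀ : 0 < T₀) :
    ∃ C : ℝ, ∀ (N : ℕ) (τ b : ℝ) (a : ℕ → ℝ),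
      0 < τ → (N : ℝ) * τ = T₀ → 0 ≤ b → K * τ ^ α < 1 →
      (∀ n, 0 ≤ a n) →
      (∀ n ≤ N, a n ≤ b + K * τ *
        ∑ j ∈ Finset.range (n + 1), (((n - j + 1 : ℕ) : ℝ) * τ) ^ (α - 1) * a j) →
      ∀ n ≤ N, a n ≤ C * b := by
  obtain ⟨hα0, hα1⟩ := hα
  have h1α : (0:ℝ) < 1 - α := by linarith
  classical
  obtain ⟨δ, hδpos, hδ1, hδprop⟩ : ∃ δ : ℝ, 0 < δ ∧ δ ≤ 1 ∧
      ∀ (N : ℕ) (τ : ℝ), 0 < τ → (N : ℝ) * τ = T₀ → K * τ ^ α < 1 → K * τ ^ α ≤ 1 - δ := by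
    have hex : ∃ m : ℕ, 0 < m ∧ K * (T₀ / (m:ℝ)) ^ α < 1 := by
      rcases eq_or_lt_of_le hK with hK0 | hKpos
      · exact ⟨1, one_pos, by rw [← hK0]; norm_num⟩
      · obtain ⟨m, hm⟩ := exists_nat_gt (T₀ * K ^ α⁻¹)
        have hKα : 0 < K ^ α⁻¹ := Real.rpow_pos_of_pos hKpos _
        have hmpos : 0 < m := by
          have h1 : (0:ℝ) < T₀ * K ^ α⁻¹ := by positivity
          have h2 : (0:ℝ) < (m:ℝ) := lt_trans h1 hm
          exact_mod_cast h2
        have hmR : (0:ℝ) < (m:ℝ) := by exact_mod_cast hmpos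
        refine ⟨m, hmpos, ?_⟩
        have hlt : T₀ / (m:ℝ) < (K⁻¹) ^ α⁻¹ := by
          rw [div_lt_iff₀ hmR, Real.inv_rpow hK]
          have h2 := mul_lt_mul_of_pos_right hm (inv_pos.mpr hKα)
          rw [mul_assoc, mul_inv_cancel₀ hKα.ne', mul_one] at h2
          linarith
        have h3 : (T₀/(m:ℝ)) ^ α < ((K⁻¹) ^ α⁻¹) ^ α := Real.rpow_lt_rpow (by positivity) hlt hα0
        rw [Real.rpow_inv_rpow (inv_nonneg.mpr hK) hα0.ne'] at h3
        calc K * (T₀/(m:ℝ))^α < K * K⁻¹ := mul_lt_mul_of_pos_left h3 hKpos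
          _ = 1 := mul_inv_cancel₀ hKpos.ne'
    obtain ⟨hN₀pos, hN₀lt⟩ := Nat.find_spec hex
    refine ⟨1 - K * (T₀ / ((Nat.find hex : ℕ):ℝ)) ^ α, by linarith, ?_, ?_⟩
    · have : 0 ≤ K * (T₀ / ((Nat.find hex : ℕ):ℝ)) ^ α :=
        mul_nonneg hK (Real.rpow_nonneg (by positivity) _)
      linarith
    · intro N τ hτ hNτ hKτ
      have hNpos : 0 < N := by
        rcases Nat.eq_zero_or_pos N with h | h
        · subst h; norm_num at hNτ; linarith
        · exact h
      have hNR : (0:ℝ) < (N:ℝ) := by exact_mod_cast hNpos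
      have hτT : τ = T₀ / (N:ℝ) := by rw [eq_div_iff hNR.ne']; linarith [hNτ]
      have hfind : Nat.find hex ≤ N := Nat.find_min' hex ⟨hNpos, by rw [← hτT]; exact hKτ⟩
      have hN₀R : (0:ℝ) < ((Nat.find hex : ℕ):ℝ) := by exact_mod_cast hN₀pos
      have hτle : τ ≤ T₀ / ((Nat.find hex : ℕ):ℝ) := by
        rw [hτT]
        apply div_le_div_of_nonneg_left hT₀.le hN₀R (by exact_mod_cast hfind)
      have h2 : τ ^ α ≤ (T₀ / ((Nat.find hex : ℕ):ℝ)) ^ α := Real.rpow_le_rpow hτ.le hτle hα0.le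
      have h3 := mul_le_mul_of_nonneg_left h2 hK
      linarith
  set Cα := 1/α + 2/(1-α) with hCαdef
  have hCαpos : 0 < Cα := by rw [hCαdef]; positivity
  obtain ⟨lam, hlam1, hlamKey⟩ : ∃ lam : ℝ, 1 ≤ lam ∧ K * Cα * lam ^ (-α) ≤ δ / 2 := by
    refine ⟨(2 * K * Cα / δ) ^ α⁻¹ + 1, ?_, ?_⟩
    · have : 0 ≤ (2 * K * Cα / δ) ^ α⁻¹ := Real.rpow_nonneg (by positivity) _
      linarith
    · set lam := (2 * K * Cα / δ) ^ α⁻¹ + 1 with hlamdef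
      have hlam0 : 0 < lam := by
        have : 0 ≤ (2 * K * Cα / δ) ^ α⁻¹ := Real.rpow_nonneg (by positivity) _
        simp only [hlamdef]; linarith
      have hbase : (0:ℝ) ≤ 2*K*Cα/δ := by positivity
      have h1 : 2*K*Cα/δ ≤ lam ^ α := by
        calc 2*K*Cα/δ = ((2*K*Cα/δ) ^ α⁻¹) ^ α := (Real.rpow_inv_rpow hbase hα0.ne').symm
          _ ≤ lam ^ α :=
              Real.rpow_le_rpow (Real.rpow_nonneg hbase _) (by simp only [hlamdef]; linarith) hα0.le
      have hpow : 0 < lam ^ α := Real.rpow_pos_of_pos hlam0 α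
      have h2 : 2*(K*Cα) ≤ δ * lam ^ α := by
        rw [div_le_iff₀ hδpos] at h1; linarith
      rw [Real.rpow_neg hlam0.le, ← div_eq_mul_inv, div_le_div_iff₀ hpow (by norm_num : (0:ℝ) < 2)]
      linarith
  have hlam0 : 0 < lam := by linarith
  refine ⟨2 / δ * Real.exp (lam * T₀), ?_⟩
  intro N τ b a hτ hNτ hb hKτ ha hrec
  have hδτ : K * τ ^ α ≤ 1 - δ := hδprop N τ hτ hNτ hKτ
  set ρ := 1 + lam * τ with hρdef
  have hρ1 : 1 ≤ ρ := by simp only [hρdef]; nlinarith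
  have hρ0 : 0 < ρ := by linarith
  have hττ : τ * τ ^ (α-1) = τ ^ α := by
    rw [mul_comm, ← Real.rpow_add_one hτ.ne' (α-1)]; ring_nf
  have main : ∀ n, n ≤ N → a n ≤ 2 * b / δ * ρ ^ n := by
    intro n
    induction n using Nat.strong_induction_on with
    | _ n IH =>
      intro hnN
      have hrecn := hrec n hnN
      rw [Finset.sum_range_succ] at hrecn
      have e0 : (((n - n + 1 : ℕ) : ℝ) * τ) = τ := by
        rw [Nat.sub_self]; norm_num
      rw [e0] at hrecn
      set S := ∑ j ∈ range n, (((n - j + 1 : ℕ) : ℝ) * τ) ^ (α - 1) * a j with hSdef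
      -- key sum bound : K * τ * S ≤ b * ρ ^ n
      set G : ℕ → ℝ := fun m => (((m:ℕ):ℝ) * τ) ^ (α-1) / (1 + ((m:ℕ):ℝ) * (lam * τ)) with hGdef
      have hterm : ∀ j ∈ range n,
          (((n - j + 1 : ℕ) : ℝ) * τ) ^ (α - 1) * a j ≤ (2*b/δ) * ρ ^ n * G (n - j) := by
        intro j hj
        rw [Finset.mem_range] at hj
        set m := n - j with hmdef
        have hm1 : 1 ≤ m := by omega
        have hmn : j + m = n := by omega
        have hmR : (1:ℝ) ≤ (m:ℝ) := by exact_mod_cast hm1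
        have hden : (0:ℝ) < 1 + (m:ℝ) * (lam * τ) := by nlinarith
        have hker0 : (0:ℝ) < (m:ℝ) * τ := by nlinarith
        have c1 : (((n - j + 1 : ℕ) : ℝ) * τ) ^ (α-1) ≤ ((m:ℝ) * τ) ^ (α-1) := by
          have ecast : ((n - j + 1 : ℕ) : ℝ) = (m:ℝ) + 1 := by
            rw [← hmdef]; push_cast; ring
          rw [ecast]
          apply Real.rpow_le_rpow_of_nonpos hker0 (by nlinarith) (by linarith)
        have c2 : ρ ^ j ≤ ρ ^ n / (1 + (m:ℝ) * (lam * τ)) := by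
          rw [le_div_iff₀ hden]
          have hber : 1 + (m:ℝ) * (lam * τ) ≤ ρ ^ m := by
            have := one_add_mul_le_pow (a := lam * τ) (by nlinarith : (-2:ℝ) ≤ lam * τ) m
            rw [hρdef]; exact this
          calc ρ ^ j * (1 + (m:ℝ) * (lam * τ)) ≤ ρ ^ j * ρ ^ m := by
                apply mul_le_mul_of_nonneg_left hber (by positivity)
            _ = ρ ^ n := by rw [← pow_add, hmn]
        have hIH : a j ≤ 2 * b / δ * ρ ^ j := IH j hj (by omega)
        have hknn : (0:ℝ) ≤ (((n - j + 1 : ℕ) : ℝ) * τ) ^ (α-1) :=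
          Real.rpow_nonneg (by positivity) _
        calc (((n - j + 1 : ℕ) : ℝ) * τ) ^ (α - 1) * a j
            ≤ (((n - j + 1 : ℕ) : ℝ) * τ) ^ (α - 1) * (2 * b / δ * ρ ^ j) :=
              mul_le_mul_of_nonneg_left hIH hknn
          _ ≤ ((m:ℝ) * τ) ^ (α-1) * (2 * b / δ * ρ ^ j) := by
              apply mul_le_mul_of_nonneg_right c1 (by positivity)
          _ ≤ ((m:ℝ) * τ) ^ (α-1) * (2 * b / δ * (ρ ^ n / (1 + (m:ℝ) * (lam * τ)))) := by
              apply mul_le_mul_of_nonneg_left ?_ (Real.rpow_nonneg hker0.le _)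
              apply mul_le_mul_of_nonneg_left c2 (by positivity)
          _ = (2*b/δ) * ρ ^ n * G m := by
              simp only [hGdef]
              field_simp
      have hS1 : S ≤ (2*b/δ) * ρ ^ n * ∑ j ∈ range n, G (j+1) := by
        calc S ≤ ∑ j ∈ range n, (2*b/δ) * ρ ^ n * G (n - j) := Finset.sum_le_sum hterm
          _ = (2*b/δ) * ρ ^ n * ∑ j ∈ range n, G (n - j) := by rw [← Finset.mul_sum]
          _ = (2*b/δ) * ρ ^ n * ∑ j ∈ range n, G (j+1) := by rw [dsg_sum_shift]
      have hGsum : K * τ * ∑ j ∈ range n, G (j+1) ≤ δ / 2 := by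
        have e1 : ∑ j ∈ range n, G (j+1)
            = τ ^ (α-1) * ∑ j ∈ range n, ((j:ℝ)+1) ^ (α-1) / (1 + ((j:ℝ)+1) * (lam * τ)) := by
          rw [Finset.mul_sum]
          apply Finset.sum_congr rfl
          intro j _
          simp only [hGdef]
          have ec : (((j+1:ℕ)):ℝ) = (j:ℝ) + 1 := by push_cast; ring
          rw [ec, Real.mul_rpow (by positivity) hτ.le]
          ring
        rw [e1]
        have e2 : K * τ * (τ ^ (α-1) * ∑ j ∈ range n, ((j:ℝ)+1) ^ (α-1) / (1 + ((j:ℝ)+1) * (lam * τ)))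
            = K * (τ ^ α * ∑ j ∈ range n, ((j:ℝ)+1) ^ (α-1) / (1 + ((j:ℝ)+1) * (lam * τ))) := by
          rw [← hττ]; ring
        rw [e2]
        calc K * (τ ^ α * ∑ j ∈ range n, ((j:ℝ)+1) ^ (α-1) / (1 + ((j:ℝ)+1) * (lam * τ)))
            ≤ K * (Cα * lam ^ (-α)) := by
              apply mul_le_mul_of_nonneg_left ?_ hK
              rw [hCαdef]
              exact dsg_step1 hα0 hα1 hlam0 hτ n
          _ = K * Cα * lam ^ (-α) := by ring
          _ ≤ δ / 2 := hlamKey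
      have hKS : K * τ * S ≤ b * ρ ^ n := by
        have hbd : (0:ℝ) ≤ 2*b/δ * ρ ^ n := by positivity
        calc K * τ * S ≤ K * τ * ((2*b/δ) * ρ ^ n * ∑ j ∈ range n, G (j+1)) := by
              apply mul_le_mul_of_nonneg_left hS1 (by positivity)
          _ = (2*b/δ * ρ ^ n) * (K * τ * ∑ j ∈ range n, G (j+1)) := by ring
          _ ≤ (2*b/δ * ρ ^ n) * (δ / 2) := mul_le_mul_of_nonneg_left hGsum hbd
          _ = b * ρ ^ n := by field_simp
      -- absorb the last term
      have habs : δ * a n ≤ b + K * τ * S := by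
        have h1 : a n ≤ b + (K * τ * S + K * τ ^ α * a n) := by
          have e3 : K * τ * (S + τ ^ (α-1) * a n) = K * τ * S + K * τ ^ α * a n := by
            rw [← hττ]; ring
          rw [← e3]; exact hrecn
        nlinarith [ha n, hδτ]
      have hρn1 : (1:ℝ) ≤ ρ ^ n := one_le_pow₀ hρ1
      have h2b : δ * a n ≤ 2 * b * ρ ^ n := by nlinarith
      rw [show 2 * b / δ * ρ ^ n = 2 * b * ρ ^ n / δ by ring, le_div_iff₀ hδpos]
      linarith
  intro n hnN
  have h1 := main n hnN
  have h2 : ρ ^ n ≤ Real.exp (lam * T₀) := by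
    calc ρ ^ n ≤ ρ ^ N := pow_le_pow_right₀ (by linarith) hnN
      _ ≤ (Real.exp (lam * τ)) ^ N := by
          apply pow_le_pow_left₀ hρ0.le ?_ N
          rw [hρdef]
          linarith [Real.add_one_le_exp (lam * τ)]
      _ = Real.exp ((N:ℝ) * (lam * τ)) := by rw [← Real.exp_nat_mul]
      _ = Real.exp (lam * T₀) := by rw [← hNτ]; ring_nf
  calc a n ≤ 2 * b / δ * ρ ^ n := h1
    _ ≤ 2 * b / δ * Real.exp (lam * T₀) := by
        apply mul_le_mul_of_nonneg_left h2 (by positivity)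
    _ = 2 / δ * Real.exp (lam * T₀) * b := by ring

end DSG
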